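/- (Monotonicity of the ruin probability in α.) Let F be the distribution function of a probability measure on [0,∞) with F(0)=0, finite mean, and F(z) < 1 for all z ≥ 0. Define g(x) = ∫ₓ^∞ (1 − F(z)) dz, so that the integrated ruin equation V = α(g + Ψ_F V) with α = λ/c corresponds to the Lundberg ruin probability. Then for every fixed x ≥ 0, the map α ↦ u_{α,g}(x) is strictly increasing on (0,∞). -/

import Mathlib

open MeasureTheory Set Filter Topology

/-- The compounding operator `Ψ_F` associated with the probability measure `μ` on `[0,∞)`
(whose distribution function is `F`, so that `F(0) = 0` reads `μ (Iic 0) = 0`):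
`(Ψ_F h)(x) = ∫₀ˣ (h(z) - ∫₀ᶻ h(z-y) dF(y)) dz`,
the inner integral being the Lebesgue–Stieltjes integral with respect to `F`. -/
noncomputable def Psi (μ : Measure ℝ) (h : ℝ → ℝ) : ℝ → ℝ :=
  fun x => ∫ z in (0:ℝ)..x, (h z - ∫ y in Icc (0:ℝ) z, h (z - y) ∂μ)

/-- `h : [0,∞) → ℝ` is locally bounded. -/
def LocBdd (h : ℝ → ℝ) : Prop :=
  ∀ x : ℝ, ∃ M : ℝ, ∀ z ∈ Icc (0:ℝ) x, |h z| ≤ M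

/-- `‖h‖_{[0,x]} = sup_{z ∈ [0,x]} |h z|`. -/
noncomputable def supNorm (h : ℝ → ℝ) (x : ℝ) : ℝ :=
  sSup ((fun z => |h z|) '' Icc (0:ℝ) x)

namespace RuinAux
set_option linter.unusedSectionVars false

/-- The kernel appearing in the inner integral of `Psi`. -/
noncomputable def K (h : ℝ → ℝ) (p : ℝ × ℝ) : ℝ :=
  (Icc (0:ℝ) p.1).indicator (fun y => h (p.1 - y)) p.2

/-- The inner integral of `Psi`, as a function of `z`. -/
noncomputable def inn (μ : Measure ℝ) (h : ℝ → ℝ) (z : ℝ) : ℝ :=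
  ∫ y, K h (z, y) ∂μ

variable {μ : Measure ℝ} [IsProbabilityMeasure μ]

lemma measurable_K {h : ℝ → ℝ} (hm : Measurable h) : Measurable (K h) := by
  have hs : MeasurableSet {p : ℝ × ℝ | p.2 ∈ Icc (0:ℝ) p.1} := by
    have : {p : ℝ × ℝ | p.2 ∈ Icc (0:ℝ) p.1}
        = {p : ℝ × ℝ | (0:ℝ) ≤ p.2} ∩ {p : ℝ × ℝ | p.2 ≤ p.1} := by
      ext p; simp [Icc, and_comm]
    rw [this]
    exact (measurableSet_le measurable_const measurable_snd).inter
      (measurableSet_le measurable_snd measurable_fst)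
  have hK : K h = {p : ℝ × ℝ | p.2 ∈ Icc (0:ℝ) p.1}.indicator
      (fun p => h (p.1 - p.2)) := by
    ext p
    by_cases hp : p.2 ∈ Icc (0:ℝ) p.1
    · rw [K, indicator_of_mem hp, indicator_of_mem (by exact hp)]
    · rw [K, indicator_of_notMem hp, indicator_of_notMem (by exact hp)]
  rw [hK]
  exact (hm.comp (measurable_fst.sub measurable_snd)).indicator hs

lemma inn_eq {h : ℝ → ℝ} (z : ℝ) :
    inn μ h z = ∫ y in Icc (0:ℝ) z, h (z - y) ∂μ := by
  rw [inn]
  exact integral_indicator measurableSet_Icc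

lemma measurable_inn {h : ℝ → ℝ} (hm : Measurable h) : Measurable (inn μ h) := by
  have : StronglyMeasurable (K h) := (measurable_K hm).stronglyMeasurable
  exact this.integral_prod_right'.measurable

lemma abs_K_le {h : ℝ → ℝ} {T M : ℝ} (hM : ∀ z ∈ Icc (0:ℝ) T, |h z| ≤ M)
    (hM0 : 0 ≤ M) {z : ℝ} (hz : z ∈ Icc (0:ℝ) T) (y : ℝ) : |K h (z, y)| ≤ M := by
  by_cases hy : y ∈ Icc (0:ℝ) z
  · rw [K, indicator_of_mem hy]
    exact hM _ ⟨by simp [sub_nonneg, hy.2], by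
      have := hy.1; have := hz.1; have := hz.2; linarith⟩
  · rw [K, indicator_of_notMem hy, abs_zero]; exact hM0

lemma abs_inn_le {h : ℝ → ℝ} {T M : ℝ} (hM : ∀ z ∈ Icc (0:ℝ) T, |h z| ≤ M)
    (hM0 : 0 ≤ M) {z : ℝ} (hz : z ∈ Icc (0:ℝ) T) : |inn μ h z| ≤ M := by
  have := norm_integral_le_of_norm_le_const (μ := μ) (f := fun y => K h (z, y)) (C := M)
    (Eventually.of_forall (fun y => by
      simpa [Real.norm_eq_abs] using abs_K_le hM hM0 hz y))
  simpa [inn, Real.norm_eq_abs, measure_univ] using this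

/-- A measurable function bounded on `[c,d]` is interval integrable. -/
lemma II {h : ℝ → ℝ} (hm : Measurable h) {c d M : ℝ} (hcd : c ≤ d)
    (hb : ∀ z ∈ Icc c d, |h z| ≤ M) : IntervalIntegrable h volume c d := by
  rw [intervalIntegrable_iff_integrableOn_Ioc_of_le hcd]
  refine Integrable.mono' (g := fun _ => M)
    (integrableOn_const measure_Ioc_lt_top.ne) hm.aestronglyMeasurable ?_
  filter_upwards [ae_restrict_mem measurableSet_Ioc] with z hz
  simpa [Real.norm_eq_abs] using hb z ⟨hz.1.le, hz.2⟩

lemma locBdd_sub {f h : ℝ → ℝ} (hf : LocBdd f) (hh : LocBdd h) :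
    LocBdd (fun z => f z - h z) := by
  intro x
  obtain ⟨Mf, hMf⟩ := hf x
  obtain ⟨Mh, hMh⟩ := hh x
  exact ⟨Mf + Mh, fun z hz => (abs_sub _ _).trans (add_le_add (hMf z hz) (hMh z hz))⟩

/-- Bounds from `LocBdd` can be taken nonnegative. -/
lemma locBdd_bound {h : ℝ → ℝ} (hlb : LocBdd h) (T : ℝ) (hT : (0:ℝ) ≤ T) :
    ∃ M : ℝ, 0 ≤ M ∧ ∀ z ∈ Icc (0:ℝ) T, |h z| ≤ M := by
  obtain ⟨M, hM⟩ := hlb T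
  exact ⟨M, (abs_nonneg _).trans (hM 0 ⟨le_refl _, hT⟩), hM⟩

/-- Fubini: the integral of the inner integral is a convolution-type integral of the
primitive. -/
lemma inn_integral {h : ℝ → ℝ} (hm : Measurable h) (hlb : LocBdd h) {t : ℝ} (ht : 0 ≤ t) :
    ∫ z in (0:ℝ)..t, inn μ h z
      = ∫ y in Icc (0:ℝ) t, (∫ s in (0:ℝ)..(t - y), h s) ∂μ := by
  obtain ⟨M, hM0, hM⟩ := locBdd_bound hlb t ht
  set ρ := volume.restrict (Ioc (0:ℝ) t) with hρ
  haveI : IsFiniteMeasure ρ := ⟨by rw [hρ, Measure.restrict_apply_univ]; exact measure_Ioc_lt_top⟩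
  have hint : Integrable (Function.uncurry (fun z y => K h (z, y))) (ρ.prod μ) := by
    have huc : Function.uncurry (fun z y => K h (z, y)) = K h := by
      ext p; rw [Function.uncurry]
    rw [huc]
    refine Integrable.mono' (integrable_const M) (measurable_K hm).aestronglyMeasurable ?_
    rw [hρ, Measure.restrict_prod_eq_prod_univ]
    filter_upwards [ae_restrict_mem (measurableSet_Ioc.prod MeasurableSet.univ)] with p hp
    have hp1 : p.1 ∈ Ioc (0:ℝ) t := hp.1
    have : |K h (p.1, p.2)| ≤ M := abs_K_le hM hM0 ⟨hp1.1.le, hp1.2⟩ p.2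
    simpa [Real.norm_eq_abs] using this
  have hswap := integral_integral_swap hint
  have hleft : ∫ z in (0:ℝ)..t, inn μ h z = ∫ z, ∫ y, K h (z, y) ∂μ ∂ρ := by
    rw [intervalIntegral.integral_of_le ht]; rfl
  rw [hleft, hswap]
  have hinner : ∀ y : ℝ, (∫ z, K h (z, y) ∂ρ)
      = (Icc (0:ℝ) t).indicator (fun y => ∫ s in (0:ℝ)..(t - y), h s) y := by
    intro y
    by_cases hy : y ∈ Icc (0:ℝ) t
    · rw [indicator_of_mem hy]
      have hKy : ∀ z : ℝ, K h (z, y) = (Ici y).indicator (fun z => h (z - y)) z := by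
        intro z
        by_cases hz : y ≤ z
        · rw [K, indicator_of_mem (by exact ⟨hy.1, hz⟩ : y ∈ Icc (0:ℝ) z),
            indicator_of_mem (by exact hz)]
        · rw [K, indicator_of_notMem (fun hc => hz hc.2),
            indicator_of_notMem (by exact hz)]
      simp_rw [hKy]
      rw [hρ, setIntegral_indicator measurableSet_Ici]
      have hae : (Ioc (0:ℝ) t ∩ Ici y : Set ℝ) =ᵐ[volume] (Ioc y t : Set ℝ) := by
        rw [MeasureTheory.ae_eq_set]
        constructor
        · refine measure_mono_null (fun z hz => ?_) (Real.volume_singleton (a := y))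
          rcases hz with ⟨⟨hz1, hz2⟩, hz3⟩
          simp only [mem_Ioc, not_and, not_le] at hz3
          have h4 : z ≤ y := not_lt.1 (fun hc => absurd (hz3 hc) (not_lt.2 hz1.2))
          have : z = y := le_antisymm h4 hz2
          simp [this]
        · refine measure_mono_null (fun z hz => ?_) (measure_empty (μ := volume))
          rcases hz with ⟨⟨hyz, hzt⟩, hz2⟩
          exact absurd ⟨⟨lt_of_le_of_lt hy.1 hyz, hzt⟩, hyz.le⟩ hz2
      rw [setIntegral_congr_set hae, ← intervalIntegral.integral_of_le hy.2]
      rw [intervalIntegral.integral_comp_sub_right (fun s => h s) y]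
      norm_num
    · rw [indicator_of_notMem hy, hρ]
      refine setIntegral_eq_zero_of_forall_eq_zero (fun z hz => ?_)
      rw [K]
      refine indicator_of_notMem (fun hc => hy ⟨hc.1, hc.2.trans hz.2⟩) _
  calc (∫ y, ∫ z, K h (z, y) ∂ρ ∂μ)
      = ∫ y, (Icc (0:ℝ) t).indicator (fun y => ∫ s in (0:ℝ)..(t - y), h s) y ∂μ := by
        exact integral_congr_ae (Eventually.of_forall hinner)
    _ = ∫ y in Icc (0:ℝ) t, (∫ s in (0:ℝ)..(t - y), h s) ∂μ :=
        integral_indicator measurableSet_Icc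

/-- The key representation `Ψ h (t) = H(t) - ∫ H(t-y) dμ(y)` with `H` the primitive of `h`. -/
lemma Psi_eq {h : ℝ → ℝ} (hm : Measurable h) (hlb : LocBdd h) {t : ℝ} (ht : 0 ≤ t) :
    Psi μ h t = (∫ s in (0:ℝ)..t, h s)
      - ∫ y in Icc (0:ℝ) t, (∫ s in (0:ℝ)..(t - y), h s) ∂μ := by
  obtain ⟨M, hM0, hM⟩ := locBdd_bound hlb t ht
  have hIIh : IntervalIntegrable h volume 0 t := II hm ht hM
  have hIIinn : IntervalIntegrable (inn μ h) volume 0 t :=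
    II (measurable_inn hm) ht (fun z hz => abs_inn_le hM hM0 hz)
  have : Psi μ h t = ∫ z in (0:ℝ)..t, (h z - inn μ h z) := by
    rw [Psi]
    congr 1
    ext z
    rw [inn_eq]
  rw [this, intervalIntegral.integral_sub hIIh hIIinn, inn_integral hm hlb ht]

/-- Continuity of the primitive `x ↦ ∫₀ˣ h` on `[0,T]` for `h` measurable locally bounded. -/
lemma contPrim {h : ℝ → ℝ} (hm : Measurable h) (hlb : LocBdd h) {T : ℝ} (hT : 0 ≤ T) :
    ContinuousOn (fun x => ∫ s in (0:ℝ)..x, h s) (Icc (0:ℝ) T) := by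
  obtain ⟨M, hM0, hM⟩ := locBdd_bound hlb T hT
  have hint : IntegrableOn h (Icc (0:ℝ) T) := by
    refine Integrable.mono' (g := fun _ => M)
      (integrableOn_const measure_Icc_lt_top.ne) hm.aestronglyMeasurable ?_
    filter_upwards [ae_restrict_mem measurableSet_Icc] with z hz
    simpa [Real.norm_eq_abs] using hM z hz
  have := intervalIntegral.continuousOn_primitive (f := h) (a := (0:ℝ)) (b := T) hint
  refine this.congr (fun x hx => ?_)
  rw [intervalIntegral.integral_of_le hx.1]

/-- `Psi` is additive w.r.t. subtraction. -/
lemma Psi_sub {f h : ℝ → ℝ} (hf : Measurable f) (hfb : LocBdd f)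
    (hh : Measurable h) (hhb : LocBdd h) {t : ℝ} (ht : 0 ≤ t) :
    Psi μ (fun z => f z - h z) t = Psi μ f t - Psi μ h t := by
  obtain ⟨Mf, hMf0, hMf⟩ := locBdd_bound hfb t ht
  obtain ⟨Mh, hMh0, hMh⟩ := locBdd_bound hhb t ht
  have hsubII : ∀ y ∈ Icc (0:ℝ) t,
      (∫ s in (0:ℝ)..(t - y), (f s - h s))
        = (∫ s in (0:ℝ)..(t - y), f s) - ∫ s in (0:ℝ)..(t - y), h s := by
    intro y hy
    have hty : (0:ℝ) ≤ t - y := by have := hy.2; linarith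
    refine intervalIntegral.integral_sub ?_ ?_
    · exact II hf hty (fun z hz => hMf z ⟨hz.1, hz.2.trans (by linarith [hy.1])⟩)
    · exact II hh hty (fun z hz => hMh z ⟨hz.1, hz.2.trans (by linarith [hy.1])⟩)
  have hcf : ContinuousOn (fun y => ∫ s in (0:ℝ)..(t - y), f s) (Icc (0:ℝ) t) := by
    refine (contPrim hf hfb ht).comp (by fun_prop) (fun y hy => ?_)
    exact ⟨by linarith [hy.2], by linarith [hy.1]⟩
  have hch : ContinuousOn (fun y => ∫ s in (0:ℝ)..(t - y), h s) (Icc (0:ℝ) t) := by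
    refine (contPrim hh hhb ht).comp (by fun_prop) (fun y hy => ?_)
    exact ⟨by linarith [hy.2], by linarith [hy.1]⟩
  rw [Psi_eq (h := fun z => f z - h z) (hf.sub hh) (locBdd_sub hfb hhb) ht, Psi_eq hf hfb ht, Psi_eq hh hhb ht]
  rw [intervalIntegral.integral_sub (II hf ht hMf) (II hh ht hMh)]
  rw [setIntegral_congr_fun measurableSet_Icc hsubII]
  rw [integral_sub (hcf.integrableOn_compact isCompact_Icc)
    (hch.integrableOn_compact isCompact_Icc)]
  ring

/-- Continuity of `Psi μ h` on `[0,∞)`. -/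
lemma contPsi {h : ℝ → ℝ} (hm : Measurable h) (hlb : LocBdd h) :
    ContinuousOn (Psi μ h) (Ici (0:ℝ)) := by
  intro t ht
  have ht' : (0:ℝ) ≤ t + 1 := by linarith [mem_Ici.1 ht]
  obtain ⟨M, hM0, hM⟩ := locBdd_bound hlb (t + 1) ht'
  have hG : Measurable (fun z => h z - inn μ h z) := hm.sub (measurable_inn hm)
  have hGb : LocBdd (fun z => h z - inn μ h z) := by
    intro x
    rcases le_or_gt x 0 with hx | hx
    · refine ⟨|h 0 - inn μ h 0|, fun z hz => ?_⟩
      have : z = 0 := le_antisymm (hz.2.trans hx) hz.1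
      rw [this]
    · obtain ⟨M', hM'0, hM'⟩ := locBdd_bound hlb x hx.le
      exact ⟨M' + M', fun z hz => (abs_sub _ _).trans
        (add_le_add (hM' z hz) (abs_inn_le hM' hM'0 hz))⟩
  have hcont : ContinuousOn (Psi μ h) (Icc (0:ℝ) (t + 1)) := by
    have := contPrim hG hGb ht'
    refine this.congr (fun x _ => ?_)
    rw [Psi]
    congr 1
    ext z
    rw [inn_eq]
  have hmem : Icc (0:ℝ) (t + 1) ∈ 𝓝[Ici (0:ℝ)] t := by
    refine Filter.mem_of_superset
      (Filter.inter_mem self_mem_nhdsWithin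
        (nhdsWithin_le_nhds (Iic_mem_nhds (lt_add_one t)))) ?_
    rintro z ⟨hz1, hz2⟩
    exact ⟨hz1, hz2⟩
  exact (hcont.continuousWithinAt ⟨ht, by linarith⟩).mono_of_mem_nhdsWithin hmem

/-- The key positivity lemma, via a first-crossing argument. -/
lemma pos_of_eq {w : ℝ → ℝ} (hm : Measurable w) (hlb : LocBdd w)
    (hwc : ContinuousOn w (Ici (0:ℝ))) {a : ℝ} (ha : 0 < a) {φ : ℝ → ℝ}
    (hφ : ∀ t ∈ Ici (0:ℝ), 0 < φ t)
    (heq : ∀ t ∈ Ici (0:ℝ), w t = a * Psi μ w t + φ t) :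
    ∀ t ∈ Ici (0:ℝ), 0 < w t := by
  by_contra hcon
  push_neg at hcon
  obtain ⟨t₀, ht₀, hw0⟩ := hcon
  set S := Ici (0:ℝ) ∩ w ⁻¹' Iic 0 with hS
  have hSne : S.Nonempty := ⟨t₀, ht₀, hw0⟩
  have hScl : IsClosed S := hwc.preimage_isClosed_of_isClosed isClosed_Ici isClosed_Iic
  have hSbb : BddBelow S := ⟨0, fun s hs => hs.1⟩
  set c := sInf S with hc
  have hcS : c ∈ S := hScl.csInf_mem hSne hSbb
  have hc0 : (0:ℝ) ≤ c := hcS.1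
  have hwpos : ∀ s, 0 ≤ s → s < c → 0 < w s := by
    intro s hs hsc
    by_contra hcon2
    push_neg at hcon2
    exact absurd (csInf_le hSbb ⟨hs, hcon2⟩) (not_le.2 hsc)
  obtain ⟨M, hM0, hM⟩ := locBdd_bound hlb c hc0
  -- nonnegativity of partial integrals of w on [0,c]
  have hnn : ∀ r q : ℝ, 0 ≤ r → r ≤ q → q ≤ c → 0 ≤ ∫ z in r..q, w z := by
    intro r q hr hrq hqc
    refine intervalIntegral.integral_nonneg_of_ae_restrict hrq ?_
    have hnec : ∀ᵐ z : ℝ, z ≠ c := by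
      have : {z : ℝ | ¬ z ≠ c} = {c} := by ext z; simp
      rw [ae_iff, this]
      exact Real.volume_singleton
    filter_upwards [ae_restrict_mem measurableSet_Icc, ae_restrict_of_ae hnec] with z hz hzc
    have hz0 : 0 ≤ z := hr.trans hz.1
    have hzc' : z < c := lt_of_le_of_ne (hz.2.trans hqc) hzc
    exact (hwpos z hz0 hzc').le
  set W : ℝ → ℝ := fun s => ∫ z in (0:ℝ)..s, w z with hW
  have hWc : 0 ≤ W c := hnn 0 c le_rfl hc0 le_rfl
  have hmono : ∀ y ∈ Icc (0:ℝ) c, W (c - y) ≤ W c := by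
    intro y hy
    have hy1 : 0 ≤ y := hy.1
    have hy2 : y ≤ c := hy.2
    have h1 : W (c - y) + (∫ z in (c - y)..c, w z) = W c :=
      intervalIntegral.integral_add_adjacent_intervals
        (II hm (by linarith) (fun z hz => hM z ⟨hz.1, by linarith [hz.2]⟩))
        (II hm (by linarith) (fun z hz => hM z ⟨by linarith [hz.1], hz.2⟩))
    have h2 : 0 ≤ ∫ z in (c - y)..c, w z := hnn (c - y) c (by linarith) (by linarith) le_rfl
    linarith
  have hWcont : ContinuousOn (fun y => W (c - y)) (Icc (0:ℝ) c) := by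
    refine (contPrim hm hlb hc0).comp (by fun_prop) (fun y hy => ?_)
    exact ⟨by linarith [hy.2], by linarith [hy.1]⟩
  have hile : (∫ y in Icc (0:ℝ) c, W (c - y) ∂μ) ≤ W c := by
    have h1 : (∫ y in Icc (0:ℝ) c, W (c - y) ∂μ) ≤ ∫ _y in Icc (0:ℝ) c, W c ∂μ :=
      setIntegral_mono_on (hWcont.integrableOn_compact isCompact_Icc)
        (integrableOn_const (measure_lt_top μ _).ne) measurableSet_Icc hmono
    have h2 : (∫ _y in Icc (0:ℝ) c, W c ∂μ) = (μ (Icc (0:ℝ) c)).toReal * W c := by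
      rw [setIntegral_const]; simp [smul_eq_mul, measureReal_def]
    have h3 : (μ (Icc (0:ℝ) c)).toReal ≤ 1 := by
      have := prob_le_one (μ := μ) (s := Icc (0:ℝ) c)
      exact_mod_cast ENNReal.toReal_le_of_le_ofReal one_pos.le (by simpa using this)
    calc (∫ y in Icc (0:ℝ) c, W (c - y) ∂μ) ≤ (μ (Icc (0:ℝ) c)).toReal * W c := by
          rw [← h2]; exact h1
      _ ≤ 1 * W c := mul_le_mul_of_nonneg_right h3 hWc
      _ = W c := one_mul _
  have hPsi : 0 ≤ Psi μ w c := by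
    rw [Psi_eq hm hlb hc0]
    have : (∫ s in (0:ℝ)..c, w s) = W c := rfl
    rw [this]
    linarith
  have : 0 < w c := by
    rw [heq c hc0]
    have := hφ c hc0
    nlinarith
  exact absurd hcS.2 (not_le.2 this)

end RuinAux

/-- monotonicity of the ruin probability in `α`: with
`g(x) = ∫ₓ^∞ (1 − F(z)) dz` (finite mean, `F(z) < 1` for all `z ≥ 0`), for every fixed
`x ≥ 0` the map `α ↦ u_{α,g}(x)` is strictly increasing on `(0,∞)`, where `u_{α,g}` is the
(unique) measurable locally bounded solution of the integrated ruin equation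
`u = α(g + Ψ_F u)`. -/
theorem ruin_strictMono_in_alpha (μ : Measure ℝ) [IsProbabilityMeasure μ]
    (hμ0 : μ (Iic 0) = 0)
    (hFlt : ∀ z ≥ (0:ℝ), (μ (Iic z)).toReal < 1)
    (hmean : IntegrableOn (fun z => 1 - (μ (Iic z)).toReal) (Ioi 0))
    (u : ℝ → ℝ → ℝ)
    (hu : ∀ a : ℝ, Measurable (u a) ∧ LocBdd (u a) ∧
      ∀ x ≥ (0:ℝ), u a x =
        a * ((∫ z in Ioi x, (1 - (μ (Iic z)).toReal)) + Psi μ (u a) x)) :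
    ∀ x ≥ (0:ℝ), StrictMonoOn (fun a => u a x) (Ioi 0) := by
  classical
  set F : ℝ → ℝ := fun z => (μ (Iic z)).toReal with hF
  set g : ℝ → ℝ := fun x => ∫ z in Ioi x, (1 - F z) with hg
  have hFmono : Monotone F := fun z₁ z₂ h =>
    ENNReal.toReal_mono (measure_ne_top μ _) (measure_mono (Iic_subset_Iic.2 h))
  have hFmeas : Measurable F := hFmono.measurable
  have hFbd : ∀ z : ℝ, |1 - F z| ≤ 1 := by
    intro z
    have h1 : 0 ≤ F z := ENNReal.toReal_nonneg
    have h2 : F z ≤ 1 := by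
      have := prob_le_one (μ := μ) (s := Iic z)
      exact ENNReal.toReal_le_of_le_ofReal one_pos.le (by simpa using this)
    rw [abs_le]; constructor <;> linarith
  -- g is positive on [0,∞)
  have hgpos : ∀ x ≥ (0:ℝ), 0 < g x := by
    intro x hx
    have hae : 0 ≤ᵐ[volume.restrict (Ioi x)] fun z => 1 - F z := by
      filter_upwards [ae_restrict_mem measurableSet_Ioi] with z hz
      have : F z < 1 := hFlt z (hx.trans (le_of_lt hz))
      simp only [Pi.zero_apply]
      linarith
    have hint : IntegrableOn (fun z => 1 - F z) (Ioi x) :=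
      hmean.mono_set (Ioi_subset_Ioi hx)
    rw [hg]
    rw [setIntegral_pos_iff_support_of_nonneg_ae hae hint]
    have hsub : Ioi x ⊆ Function.support (fun z => 1 - F z) ∩ Ioi x := by
      intro z hz
      refine ⟨?_, hz⟩
      have : F z < 1 := hFlt z (hx.trans (le_of_lt hz))
      simp only [Function.mem_support]
      intro hc
      rw [sub_eq_zero] at hc
      exact absurd hc.symm (ne_of_lt this)
    calc (0:ENNReal) < ⊤ := by simp
      _ = volume (Ioi x) := (Real.volume_Ioi).symm
      _ ≤ volume (Function.support (fun z => 1 - F z) ∩ Ioi x) := measure_mono hsub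
  -- g is continuous on [0,∞)
  have hgcont : ContinuousOn g (Ici (0:ℝ)) := by
    have hsplit : ∀ x ∈ Ici (0:ℝ), g x = g 0 - ∫ z in (0:ℝ)..x, (1 - F z) := by
      intro x hx
      have hx' : (0:ℝ) ≤ x := hx
      have hdisj : Disjoint (Ioc (0:ℝ) x) (Ioi x) := by
        rw [Set.disjoint_left]
        intro z hz hz'
        exact absurd hz.2 (not_le.2 hz')
      have hunion : Ioc (0:ℝ) x ∪ Ioi x = Ioi (0:ℝ) := Ioc_union_Ioi_eq_Ioi hx'
      have h1 : IntegrableOn (fun z => 1 - F z) (Ioc (0:ℝ) x) :=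
        hmean.mono_set Ioc_subset_Ioi_self
      have h2 : IntegrableOn (fun z => 1 - F z) (Ioi x) :=
        hmean.mono_set (Ioi_subset_Ioi hx')
      have := MeasureTheory.setIntegral_union hdisj measurableSet_Ioi h1 h2
      rw [hunion] at this
      rw [intervalIntegral.integral_of_le hx']
      have hg0 : g 0 = ∫ z in Ioi (0:ℝ), (1 - F z) := rfl
      rw [hg0, this]
      ring
    have hprim : ContinuousOn (fun x => g 0 - ∫ z in (0:ℝ)..x, (1 - F z)) (Ici (0:ℝ)) := by
      intro t ht
      have ht' : (0:ℝ) ≤ t + 1 := by linarith [mem_Ici.1 ht]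
      have hlb1 : LocBdd (fun z => 1 - F z) := fun x => ⟨1, fun z _ => hFbd z⟩
      have hcp := RuinAux.contPrim (continuous_const.measurable.sub hFmeas) hlb1 ht'
      have hcc : ContinuousOn (fun x => g 0 - ∫ z in (0:ℝ)..x, (1 - F z)) (Icc (0:ℝ) (t+1)) :=
        continuousOn_const.sub hcp
      have hmem : Icc (0:ℝ) (t + 1) ∈ 𝓝[Ici (0:ℝ)] t := by
        refine Filter.mem_of_superset
          (Filter.inter_mem self_mem_nhdsWithin
            (nhdsWithin_le_nhds (Iic_mem_nhds (lt_add_one t)))) ?_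
        rintro z ⟨hz1, hz2⟩
        exact ⟨hz1, hz2⟩
      exact (hcc.continuousWithinAt ⟨ht, by linarith⟩).mono_of_mem_nhdsWithin hmem
    exact hprim.congr hsplit
  -- each solution is continuous on [0,∞)
  have hucont : ∀ c : ℝ, ContinuousOn (u c) (Ici (0:ℝ)) := by
    intro c
    obtain ⟨hcm, hclb, hceq⟩ := hu c
    have : ContinuousOn (fun t => c * (g t + Psi μ (u c) t)) (Ici (0:ℝ)) :=
      continuousOn_const.mul (hgcont.add (RuinAux.contPsi hcm hclb))
    exact this.congr (fun t ht => hceq t ht)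
  intro x hx a ha b hb hab
  obtain ⟨ham, halb, haeq⟩ := hu a
  obtain ⟨hbm, hblb, hbeq⟩ := hu b
  have ha0 : (0:ℝ) < a := ha
  have hb0 : (0:ℝ) < b := hb
  -- positivity of u b
  have hub_pos : ∀ t ∈ Ici (0:ℝ), 0 < u b t := by
    refine RuinAux.pos_of_eq (μ := μ) hbm hblb (hucont b) hb0
      (φ := fun t => b * g t) (fun t ht => mul_pos hb0 (hgpos t ht)) ?_
    intro t ht
    rw [hbeq t ht]
    ring
  -- the difference satisfies the equation with a positive inhomogeneity
  set w : ℝ → ℝ := fun t => u b t - u a t with hw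
  have hwm : Measurable w := hbm.sub ham
  have hwlb : LocBdd w := RuinAux.locBdd_sub hblb halb
  have hwc : ContinuousOn w (Ici (0:ℝ)) := (hucont b).sub (hucont a)
  have hweq : ∀ t ∈ Ici (0:ℝ), w t = a * Psi μ w t + ((b - a) / b) * u b t := by
    intro t ht
    have hbne : b ≠ 0 := ne_of_gt hb0
    have e1 : Psi μ w t = Psi μ (u b) t - Psi μ (u a) t :=
      RuinAux.Psi_sub hbm hblb ham halb ht
    have e2 : g t + Psi μ (u b) t = u b t / b := by
      have := hbeq t ht
      field_simp
      linarith [this]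
    have : w t = a * (Psi μ (u b) t - Psi μ (u a) t) + (b - a) * (g t + Psi μ (u b) t) := by
      rw [hw]
      simp only
      rw [hbeq t ht, haeq t ht]
      ring
    rw [this, ← e1, e2]
    field_simp
  have hwpos : ∀ t ∈ Ici (0:ℝ), 0 < w t := by
    refine RuinAux.pos_of_eq (μ := μ) hwm hwlb hwc ha0
      (φ := fun t => ((b - a) / b) * u b t) (fun t ht => ?_) hweq
    exact mul_pos (div_pos (sub_pos.2 hab) hb0) (hub_pos t ht)
  have := hwpos x hx
  simp only [hw] at this
  simpa using sub_pos.1 this
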